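/- RS-graph lower bound construction: let G be a bipartite graph on L ⊔ R with |L| = |R| = n whose edge set is partitioned into t induced matchings M_1, ..., M_t each of size r. Then the instance with variables x_1,...,x_n, y_1,...,y_n, z_1,...,z_t and constraints {(x_u, y_v, z_i) : (u,v) ∈ M_i, i ∈ [t]} is a conditionally non-redundant instance of CSP(P | Q) with P = {001, 011, 101, 110} and Q = P ∪ {000}, of size t·r. -/

import Mathlib

/-- `P = {001, 011, 101, 110}`. -/
def P299' : Set (Bool × Bool × Bool) :=
  {(false, false, true), (false, true, true), (true, false, true), (true, true, false)}

/-- RS-graph lower bound construction: let `G` be a bipartite graph on `L ⊔ R` with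
`|L| = |R| = n` whose edge set is partitioned into `t` induced matchings
`M 0, …, M (t-1)`, each of size `r`. Then the instance with variables
`x_1,…,x_n, y_1,…,y_n, z_1,…,z_t` and constraints `(x_u, y_v, z_i)` for `(u,v) ∈ M i`
is a conditionally non-redundant instance of `CSP(P | Q)` with
`P = {001,011,101,110}`, `Q = P ∪ {000}`, of size `t·r`. -/
theorem rs_graph_construction (n t r : ℕ) (M : Fin t → Finset (Fin n × Fin n))
    (hcard : ∀ i, (M i).card = r)
    (hmatching : ∀ i, ∀ p ∈ M i, ∀ q ∈ M i, p ≠ q → p.1 ≠ q.1 ∧ p.2 ≠ q.2)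
    (hdisjoint : ∀ i j, i ≠ j → Disjoint (M i) (M j))
    (hinduced : ∀ i j : Fin t, ∀ p ∈ M j,
      (∃ q ∈ M i, p.1 = q.1) → (∃ q ∈ M i, p.2 = q.2) → p ∈ M i) :
    ∀ E : Finset (Fin n × Fin n × Fin t),
      E = Finset.univ.biUnion (fun i => (M i).image fun p => (p.1, p.2, i)) →
      E.card = t * r ∧
      ∀ e ∈ E, ∃ (ψx ψy : Fin n → Bool) (ψz : Fin t → Bool),
        ψx e.1 = false ∧ ψy e.2.1 = false ∧ ψz e.2.2 = false ∧
        ∀ e' ∈ E, e' ≠ e → (ψx e'.1, ψy e'.2.1, ψz e'.2.2) ∈ P299' := by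
  intro E hE
  -- membership characterization
  have hmem : ∀ e' : Fin n × Fin n × Fin t, e' ∈ E → (e'.1, e'.2.1) ∈ M e'.2.2 := by
    intro e' he'
    rw [hE, Finset.mem_biUnion] at he'
    obtain ⟨i, -, hi⟩ := he'
    rw [Finset.mem_image] at hi
    obtain ⟨p, hp, hpe⟩ := hi
    cases hpe
    exact hp
  constructor
  · subst hE
    rw [Finset.card_biUnion]
    · have : ∀ i : Fin t, ((M i).image fun p => (p.1, p.2, i)).card = r := by
        intro i
        rw [Finset.card_image_of_injective _ (fun p q h => ?_), hcard]
        injection h with h1 h2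
        injection h2 with h2 h3
        exact Prod.ext h1 h2
      simp [this, Finset.sum_const, mul_comm]
    · intro i _ j _ hij
      simp only [Function.onFun]
      rw [Finset.disjoint_left]
      intro a ha hb
      rw [Finset.mem_image] at ha hb
      obtain ⟨p, -, hp⟩ := ha
      obtain ⟨q, -, hq⟩ := hb
      apply hij
      have := hp.trans hq.symm
      exact (congrArg (fun x => x.2.2) this)
  · intro e he
    have heM : (e.1, e.2.1) ∈ M e.2.2 := hmem e he
    refine ⟨fun a => decide (a ∈ ((M e.2.2).image Prod.fst).erase e.1),
            fun b => decide (b ∈ ((M e.2.2).image Prod.snd).erase e.2.1),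
            fun j => decide (j ≠ e.2.2), by simp, by simp, by simp, ?_⟩
    intro e' he' hne
    have h'M : (e'.1, e'.2.1) ∈ M e'.2.2 := hmem e' he'
    by_cases hj : e'.2.2 = e.2.2
    · -- same matching: both x and y differ
      have hpq : (e'.1, e'.2.1) ≠ (e.1, e.2.1) := by
        intro h
        apply hne
        rw [Prod.ext_iff] at h
        exact Prod.ext h.1 (Prod.ext h.2 hj)
      rw [hj] at h'M
      obtain ⟨hx, hy⟩ := hmatching e.2.2 _ h'M _ heM hpq
      simp only [Prod.fst, Prod.snd] at hx hy
      have hxm : e'.1 ∈ ((M e.2.2).image Prod.fst).erase e.1 :=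
        Finset.mem_erase.mpr ⟨hx, Finset.mem_image.mpr ⟨_, h'M, rfl⟩⟩
      have hym : e'.2.1 ∈ ((M e.2.2).image Prod.snd).erase e.2.1 :=
        Finset.mem_erase.mpr ⟨hy, Finset.mem_image.mpr ⟨_, h'M, rfl⟩⟩
      simp [hxm, hym, hj, P299']
    · -- different matching: z = true, not both x y true
      have hz : decide (e'.2.2 ≠ e.2.2) = true := by simp [hj]
      have hnotboth : ¬ (e'.1 ∈ ((M e.2.2).image Prod.fst).erase e.1 ∧
          e'.2.1 ∈ ((M e.2.2).image Prod.snd).erase e.2.1) := by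
        rintro ⟨hx, hy⟩
        obtain ⟨-, hx'⟩ := Finset.mem_erase.mp hx
        obtain ⟨-, hy'⟩ := Finset.mem_erase.mp hy
        obtain ⟨p, hp, hpe⟩ := Finset.mem_image.mp hx'
        obtain ⟨q, hq, hqe⟩ := Finset.mem_image.mp hy'
        have hin : (e'.1, e'.2.1) ∈ M e.2.2 :=
          hinduced e.2.2 e'.2.2 _ h'M ⟨p, hp, hpe.symm⟩ ⟨q, hq, hqe.symm⟩
        exact Finset.disjoint_left.mp (hdisjoint e.2.2 e'.2.2 (fun h => hj h.symm)) hin h'M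
      simp only []
      rw [hz]
      cases hx : decide (e'.1 ∈ ((M e.2.2).image Prod.fst).erase e.1) <;>
        cases hy : decide (e'.2.1 ∈ ((M e.2.2).image Prod.snd).erase e.2.1)
      · simp [P299']
      · simp [P299']
      · simp [P299']
      · exact absurd ⟨of_decide_eq_true hx, of_decide_eq_true hy⟩ hnotboth
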